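/- The canonical successor S on complete types is fully confluent: (forth) if Φ≤Ψ then S(Φ)≤S(Ψ); (back–up) if Ψ=S(Φ) and Ψ≤Θ then there is Υ with Φ≤Υ and S(Υ)=Θ; (back–down) if Ψ=S(Φ) and Θ≤Ψ then there is Υ with Υ≤Φ and S(Υ)=Θ. -/

import Mathlib

/-- Formulas of the Gödel temporal language. -/
inductive GF where
  | var : Nat → GF
  | and : GF → GF → GF
  | or : GF → GF → GF
  | imp : GF → GF → GF
  | coimp : GF → GF → GF
  | next : GF → GF
  | dia : GF → GF
  | box : GF → GF
deriving DecidableEq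

/-- ⊥ := p ⇐ p -/
def GF.bot : GF := .coimp (.var 0) (.var 0)
/-- ⊤ := p ⇒ p -/
def GF.top : GF := .imp (.var 0) (.var 0)
/-- ¬φ := φ ⇒ ⊥ -/
def GF.neg (φ : GF) : GF := .imp φ .bot
/-- φ ⟺ ψ := (φ⇒ψ) ∧ (ψ⇒φ) -/
def GF.iffF (φ ψ : GF) : GF := .and (.imp φ ψ) (.imp ψ φ)

/-- The deductive calculus GTL. Intuitionistic tautologies are generated by a
standard Hilbert-style axiomatization of intuitionistic propositional logic. -/
inductive GTL : GF → Prop where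
  -- intuitionistic axioms
  | i1 (φ ψ : GF) : GTL (.imp φ (.imp ψ φ))
  | i2 (φ ψ χ : GF) : GTL (.imp (.imp φ (.imp ψ χ)) (.imp (.imp φ ψ) (.imp φ χ)))
  | i3 (φ ψ : GF) : GTL (.imp (.and φ ψ) φ)
  | i4 (φ ψ : GF) : GTL (.imp (.and φ ψ) ψ)
  | i5 (φ ψ : GF) : GTL (.imp φ (.imp ψ (.and φ ψ)))
  | i6 (φ ψ : GF) : GTL (.imp φ (.or φ ψ))
  | i7 (φ ψ : GF) : GTL (.imp ψ (.or φ ψ))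
  | i8 (φ ψ χ : GF) : GTL (.imp (.imp φ χ) (.imp (.imp ψ χ) (.imp (.or φ ψ) χ)))
  | i9 (φ : GF) : GTL (.imp .bot φ)
  -- H-B axioms and rules
  | hb1 (φ ψ : GF) : GTL (.imp φ (.or ψ (.coimp φ ψ)))
  | hbMon {φ ψ : GF} (θ : GF) : GTL (.imp φ ψ) → GTL (.imp (.coimp φ θ) (.coimp ψ θ))
  | hbDis {φ ψ γ : GF} : GTL (.imp φ (.or ψ γ)) → GTL (.imp (.coimp φ ψ) γ)
  -- linearity axioms
  | lin (φ ψ : GF) : GTL (.or (.imp φ ψ) (.imp ψ φ))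
  | colin (φ ψ : GF) : GTL (GF.neg (.and (.coimp φ ψ) (.coimp ψ φ)))
  -- temporal axioms
  | nBot : GTL (GF.neg (.next .bot))
  | nOr (φ ψ : GF) : GTL (.imp (.next (.or φ ψ)) (.or (.next φ) (.next ψ)))
  | nAnd (φ ψ : GF) : GTL (.imp (.and (.next φ) (.next ψ)) (.next (.and φ ψ)))
  | nImp (φ ψ : GF) : GTL (GF.iffF (.next (.imp φ ψ)) (.imp (.next φ) (.next ψ)))
  | kBox (φ ψ : GF) : GTL (.imp (.box (.imp φ ψ)) (.imp (.box φ) (.box ψ)))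
  | kDia (φ ψ : GF) : GTL (.imp (.box (.imp φ ψ)) (.imp (.dia φ) (.dia ψ)))
  | boxFix (φ : GF) : GTL (.imp (.box φ) (.and φ (.next (.box φ))))
  | diaFix (φ : GF) : GTL (.imp (.or φ (.next (.dia φ))) (.dia φ))
  | indBox (φ : GF) : GTL (.imp (.box (.imp φ (.next φ))) (.imp φ (.box φ)))
  | indDia (φ : GF) : GTL (.imp (.box (.imp (.next φ) φ)) (.imp (.dia φ) φ))
  -- back–up confluence axiom
  | backup (φ ψ : GF) : GTL (.imp (.next (.coimp φ ψ)) (.coimp (.next φ) (.next ψ)))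
  -- standard modal rules
  | mp {φ ψ : GF} : GTL φ → GTL (.imp φ ψ) → GTL ψ
  | necN {φ : GF} : GTL φ → GTL (.next φ)
  | necBox {φ : GF} : GTL φ → GTL (.box φ)

/-- Finite conjunction (⋀∅ = ⊤). -/
def GF.conj : List GF → GF := fun l => l.foldr .and .top
/-- Finite disjunction (⋁∅ = ⊥). -/
def GF.disj : List GF → GF := fun l => l.foldr .or .bot

/-- Gentzen-style consequence: Γ ⊢ Δ iff ⋀Γ' ⇒ ⋁Δ' ∈ GTL for some finite
Γ' ⊆ Γ, Δ' ⊆ Δ. -/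
def GSeq (Γ Δ : Set GF) : Prop :=
  ∃ l m : List GF, (∀ φ ∈ l, φ ∈ Γ) ∧ (∀ φ ∈ m, φ ∈ Δ) ∧
    GTL (.imp (GF.conj l) (GF.disj m))

/-- A complete type: a consistent saturated pair. -/
def CompleteType (P N : Set GF) : Prop :=
  ¬ GSeq P N ∧ ∀ φ : GF, φ ∈ P ∨ φ ∈ N

/-- The canonical order: Φ ≤ Ψ iff Φ⁻ ⊆ Ψ⁻ and Φ⁺ ⊇ Ψ⁺. -/
def TLe (Φ Ψ : Set GF × Set GF) : Prop := Φ.2 ⊆ Ψ.2 ∧ Ψ.1 ⊆ Φ.1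

/-- The canonical successor: S(Φ) = (⊖Φ⁺, ⊖Φ⁻). -/
def TSucc (Φ : Set GF × Set GF) : Set GF × Set GF :=
  ({φ | GF.next φ ∈ Φ.1}, {φ | GF.next φ ∈ Φ.2})

namespace Confl

/-- Natural-deduction style derivability from a finite list of hypotheses. -/
inductive ID : List GF → GF → Prop
  | ax {Γ : List GF} {φ : GF} : GTL φ → ID Γ φ
  | hyp {Γ : List GF} {φ : GF} : φ ∈ Γ → ID Γ φ
  | mp {Γ : List GF} {φ ψ : GF} : ID Γ (.imp φ ψ) → ID Γ φ → ID Γ ψ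

namespace ID

theorem weak {Γ Δ : List GF} {φ : GF} (h : ID Γ φ) (hs : ∀ x ∈ Γ, x ∈ Δ) : ID Δ φ := by
  induction h with
  | ax h => exact .ax h
  | hyp h => exact .hyp (hs _ h)
  | mp _ _ ih1 ih2 => exact .mp ih1 ih2

theorem idimp {Γ : List GF} (φ : GF) : ID Γ (.imp φ φ) :=
  .mp (.mp (.ax (GTL.i2 φ (.imp φ φ) φ)) (.ax (GTL.i1 φ (.imp φ φ)))) (.ax (GTL.i1 φ φ))

theorem ded {Γ : List GF} {φ ψ : GF} (h : ID (φ :: Γ) ψ) : ID Γ (.imp φ ψ) := by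
  have main : ∀ Δ χ, ID Δ χ → ∀ (φ : GF) (Γ : List GF), Δ = φ :: Γ → ID Γ (.imp φ χ) := by
    intro Δ χ h
    induction h with
    | ax h => intro φ Γ _; exact .mp (.ax (GTL.i1 _ φ)) (.ax h)
    | hyp hm =>
      intro φ Γ e; subst e
      rcases List.mem_cons.mp hm with rfl | h'
      · exact idimp _
      · exact .mp (.ax (GTL.i1 _ φ)) (.hyp h')
    | mp _ _ ih1 ih2 =>
      intro φ Γ e
      exact .mp (.mp (.ax (GTL.i2 φ _ _)) (ih1 φ Γ e)) (ih2 φ Γ e)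
  exact main _ _ h φ Γ rfl

theorem andI {Γ : List GF} {φ ψ : GF} (h1 : ID Γ φ) (h2 : ID Γ ψ) : ID Γ (.and φ ψ) :=
  .mp (.mp (.ax (GTL.i5 φ ψ)) h1) h2

theorem andE1 {Γ : List GF} {φ ψ : GF} (h : ID Γ (.and φ ψ)) : ID Γ φ := .mp (.ax (GTL.i3 φ ψ)) h
theorem andE2 {Γ : List GF} {φ ψ : GF} (h : ID Γ (.and φ ψ)) : ID Γ ψ := .mp (.ax (GTL.i4 φ ψ)) h
theorem orI1 {Γ : List GF} {φ : GF} (ψ : GF) (h : ID Γ φ) : ID Γ (.or φ ψ) := .mp (.ax (GTL.i6 φ ψ)) h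
theorem orI2 {Γ : List GF} {ψ : GF} (φ : GF) (h : ID Γ ψ) : ID Γ (.or φ ψ) := .mp (.ax (GTL.i7 φ ψ)) h
theorem botE {Γ : List GF} (φ : GF) (h : ID Γ GF.bot) : ID Γ φ := .mp (.ax (GTL.i9 φ)) h

theorem orE {Γ : List GF} {φ ψ χ : GF} (h : ID Γ (.or φ ψ))
    (h1 : ID (φ :: Γ) χ) (h2 : ID (ψ :: Γ) χ) : ID Γ χ :=
  .mp (.mp (.mp (.ax (GTL.i8 φ ψ χ)) (ded h1)) (ded h2)) h

theorem top {Γ : List GF} : ID Γ GF.top := idimp _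

theorem conjI {Γ : List GF} {l : List GF} (h : ∀ ψ ∈ l, ID Γ ψ) : ID Γ (GF.conj l) := by
  induction l with
  | nil => exact top
  | cons x xs ih =>
    exact andI (h x (List.mem_cons_self)) (ih fun ψ hψ => h ψ (List.mem_cons_of_mem _ hψ))

theorem conjE {Γ : List GF} {l : List GF} {ψ : GF} (h : ID Γ (GF.conj l)) (hm : ψ ∈ l) :
    ID Γ ψ := by
  induction l with
  | nil => cases hm
  | cons x xs ih =>
    rcases List.mem_cons.mp hm with h' | h'
    · subst h'; exact andE1 h
    · exact ih (andE2 h) h'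

theorem disjI {Γ : List GF} {m : List GF} {ψ : GF} (hm : ψ ∈ m) (h : ID Γ ψ) :
    ID Γ (GF.disj m) := by
  induction m with
  | nil => cases hm
  | cons x xs ih =>
    rcases List.mem_cons.mp hm with h' | h'
    · subst h'; exact orI1 _ h
    · exact orI2 _ (ih h')

theorem disjE {Γ : List GF} {m : List GF} {χ : GF} (h : ID Γ (GF.disj m))
    (hb : ∀ ψ ∈ m, ID (ψ :: Γ) χ) : ID Γ χ := by
  induction m generalizing Γ with
  | nil => exact botE _ h
  | cons x xs ih =>
    refine orE h (hb x (List.mem_cons_self)) ?_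
    refine ih (.hyp (List.mem_cons_self)) fun ψ hψ => ?_
    exact weak (hb ψ (List.mem_cons_of_mem _ hψ))
      (fun y hy => by
        rcases List.mem_cons.mp hy with h' | h'
        · exact h' ▸ List.mem_cons_self
        · exact List.mem_cons_of_mem _ (List.mem_cons_of_mem _ h'))

theorem disjMono {Γ : List GF} {m m' : List GF} (hs : ∀ ψ ∈ m, ψ ∈ m')
    (h : ID Γ (GF.disj m)) : ID Γ (GF.disj m') :=
  disjE h fun ψ hψ => disjI (hs ψ hψ) (.hyp (List.mem_cons_self))

theorem cutHyps {Γ Δ : List GF} {φ : GF} (h : ID Γ φ) (hs : ∀ γ ∈ Γ, ID Δ γ) : ID Δ φ := by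
  induction h with
  | ax h => exact .ax h
  | hyp h => exact hs _ h
  | mp _ _ ih1 ih2 => exact .mp ih1 ih2

end ID

theorem GTL.ofID {φ : GF} (h : ID [] φ) : GTL φ := by
  have main : ∀ Γ ψ, ID Γ ψ → Γ = [] → GTL ψ := by
    intro Γ ψ h
    induction h with
    | ax h => intro _; exact h
    | hyp hm => intro e; subst e; cases hm
    | mp _ _ ih1 ih2 => intro e; exact GTL.mp (ih2 e) (ih1 e)
  exact main _ _ h rfl

theorem GTL.impOf {φ ψ : GF} (h : ID [φ] ψ) : GTL (.imp φ ψ) := GTL.ofID (ID.ded h)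

theorem GTL.seqOf {l m : List GF} (h : ID l (GF.disj m)) :
    GTL (.imp (GF.conj l) (GF.disj m)) :=
  GTL.impOf (ID.cutHyps h fun γ hγ => ID.conjE (.hyp (List.mem_cons_self)) hγ)

theorem mkGSeq {P N : Set GF} {l m : List GF} (hl : ∀ φ ∈ l, φ ∈ P) (hm : ∀ φ ∈ m, φ ∈ N)
    (h : ID l (GF.disj m)) : GSeq P N := ⟨l, m, hl, hm, GTL.seqOf h⟩

theorem ID.ofSeq {Γ l m : List GF} (h : GTL (.imp (GF.conj l) (GF.disj m)))
    (hl : ∀ φ ∈ l, ID Γ φ) : ID Γ (GF.disj m) := .mp (.ax h) (conjI hl)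

end Confl
namespace Confl

theorem GTL.iffL {a b : GF} (h : GTL (GF.iffF a b)) : GTL (.imp a b) :=
  GTL.mp h (GTL.i3 _ _)
theorem GTL.iffR {a b : GF} (h : GTL (GF.iffF a b)) : GTL (.imp b a) :=
  GTL.mp h (GTL.i4 _ _)

theorem GTL.nextMono {φ ψ : GF} (h : GTL (.imp φ ψ)) : GTL (.imp (.next φ) (.next ψ)) :=
  GTL.mp (GTL.necN h) (GTL.iffL (GTL.nImp φ ψ))

/-- ○⋀a ⇒ ⋀(○a) -/
theorem nextConjE (a : List GF) :
    GTL (.imp (.next (GF.conj a)) (GF.conj (a.map .next))) := by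
  apply GTL.impOf
  apply ID.conjI
  intro ψ hψ
  rcases List.mem_map.mp hψ with ⟨x, hx, rfl⟩
  exact .mp (.ax (GTL.nextMono (GTL.impOf (ID.conjE (.hyp (List.mem_cons_self)) hx))))
    (.hyp (List.mem_cons_self))

/-- ○x ⇒ ○⋁b for x ∈ b -/
theorem nextDisjI {x : GF} {b : List GF} (hx : x ∈ b) :
    GTL (.imp (.next x) (.next (GF.disj b))) :=
  GTL.nextMono (GTL.impOf (ID.disjI hx (.hyp (List.mem_cons_self))))

theorem notBoth {P N : Set GF} (h : CompleteType P N) {φ : GF}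
    (hP : φ ∈ P) (hN : φ ∈ N) : False :=
  h.1 (mkGSeq (l := [φ]) (m := [φ])
    (by intro x hx; rcases List.mem_singleton.mp hx with rfl; exact hP)
    (by intro x hx; rcases List.mem_singleton.mp hx with rfl; exact hN)
    (ID.disjI (List.mem_singleton.mpr rfl) (.hyp (List.mem_cons_self))))

theorem memIffNot {P N : Set GF} (h : CompleteType P N) (φ : GF) :
    φ ∈ P ↔ φ ∉ N := by
  constructor
  · intro hP hN; exact notBoth h hP hN
  · intro hN; rcases h.2 φ with hP | h'; exact hP; exact absurd h' hN

/-- The cut rule for GSeq. -/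
theorem cutSeq {P N : Set GF} (φ : GF) (h1 : GSeq (insert φ P) N) (h2 : GSeq P (insert φ N)) :
    GSeq P N := by
  classical
  obtain ⟨l₁, m₁, hl₁, hm₁, H₁⟩ := h1
  obtain ⟨l₂, m₂, hl₂, hm₂, H₂⟩ := h2
  set l₁' := l₁.filter (fun x => x ≠ φ) with hl₁'
  set m₂' := m₂.filter (fun x => x ≠ φ) with hm₂'
  refine mkGSeq (P := P) (N := N) (l := l₁' ++ l₂) (m := m₁ ++ m₂') ?_ ?_ ?_
  · intro x hx
    rcases List.mem_append.mp hx with hx | hx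
    · obtain ⟨hx1, hx2⟩ := List.mem_filter.mp hx
      rcases Set.mem_insert_iff.mp (hl₁ x hx1) with rfl | h
      · simp at hx2
      · exact h
    · exact hl₂ x hx
  · intro x hx
    rcases List.mem_append.mp hx with hx | hx
    · exact hm₁ x hx
    · obtain ⟨hx1, hx2⟩ := List.mem_filter.mp hx
      rcases Set.mem_insert_iff.mp (hm₂ x hx1) with rfl | h
      · simp at hx2
      · exact h
  · -- derive disj (m₁ ++ m₂') from hypotheses l₁' ++ l₂
    have hd2 : ID (l₁' ++ l₂) (GF.disj m₂) :=
      ID.ofSeq H₂ (fun x hx => .hyp (List.mem_append_right _ hx))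
    refine ID.disjE hd2 fun ψ hψ => ?_
    by_cases hψφ : ψ = φ
    · subst hψφ
      have hd1 : ID (ψ :: (l₁' ++ l₂)) (GF.disj m₁) := by
        refine ID.ofSeq H₁ fun x hx => ?_
        by_cases hxφ : x = ψ
        · subst hxφ; exact .hyp (List.mem_cons_self)
        · exact .hyp (List.mem_cons_of_mem _ (List.mem_append_left _
            (List.mem_filter.mpr ⟨hx, by simp [hxφ]⟩)))
      exact ID.disjMono (fun x hx => List.mem_append_left _ hx) hd1
    · exact ID.disjI (List.mem_append_right _ (List.mem_filter.mpr ⟨hψ, by simp [hψφ]⟩))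
        (.hyp (List.mem_cons_self))

/-- GSeq is finitary over chains (on encoded pairs). -/
theorem chain_mem {α : Type} {c : Set (Set α)} (hc : IsChain (· ⊆ ·) c) (hne : c.Nonempty)
    (L : List α) (hL : ∀ x ∈ L, x ∈ ⋃₀ c) : ∃ t ∈ c, ∀ x ∈ L, x ∈ t := by
  induction L with
  | nil => exact ⟨hne.choose, hne.choose_spec, by simp⟩
  | cons a L ih =>
    obtain ⟨t, ht, hts⟩ := ih (fun x hx => hL x (List.mem_cons_of_mem _ hx))
    obtain ⟨s, hs, has⟩ := hL a (List.mem_cons_self)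
    rcases eq_or_ne s t with rfl | hne'
    · exact ⟨s, hs, fun x hx => by
        rcases List.mem_cons.mp hx with rfl | hx; exact has; exact hts x hx⟩
    rcases hc hs ht hne' with h | h
    · exact ⟨t, ht, fun x hx => by
        rcases List.mem_cons.mp hx with rfl | hx; exact h has; exact hts x hx⟩
    · exact ⟨s, hs, fun x hx => by
        rcases List.mem_cons.mp hx with rfl | hx; exact has; exact h (hts x hx)⟩

/-- decode an encoded pair -/
def dec (s : Set (GF ⊕ GF)) : Set GF × Set GF :=
  ({φ | Sum.inl φ ∈ s}, {φ | Sum.inr φ ∈ s})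

theorem lindenbaum (P₀ N₀ : Set GF) (h : ¬ GSeq P₀ N₀) :
    ∃ P N : Set GF, CompleteType P N ∧ P₀ ⊆ P ∧ N₀ ⊆ N := by
  classical
  set S : Set (Set (GF ⊕ GF)) :=
    {s | P₀ ⊆ (dec s).1 ∧ N₀ ⊆ (dec s).2 ∧ ¬ GSeq (dec s).1 (dec s).2} with hS
  have hs₀ : (Sum.inl '' P₀ ∪ Sum.inr '' N₀) ∈ S := by
    constructor
    · intro φ hφ; exact Set.mem_union_left _ ⟨φ, hφ, rfl⟩
    constructor
    · intro φ hφ; exact Set.mem_union_right _ ⟨φ, hφ, rfl⟩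
    · have h1 : (dec (Sum.inl '' P₀ ∪ Sum.inr '' N₀)).1 = P₀ := by
        ext φ; simp [dec]
      have h2 : (dec (Sum.inl '' P₀ ∪ Sum.inr '' N₀)).2 = N₀ := by
        ext φ; simp [dec]
      rw [h1, h2]; exact h
  have hchain : ∀ c ⊆ S, IsChain (· ⊆ ·) c → c.Nonempty → ∃ ub ∈ S, ∀ s ∈ c, s ⊆ ub := by
    intro c hcS hc hcne
    refine ⟨⋃₀ c, ?_, fun s hs => Set.subset_sUnion_of_mem hs⟩
    obtain ⟨t, htc⟩ := hcne
    refine ⟨?_, ?_, ?_⟩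
    · intro φ hφ
      exact Set.mem_sUnion.mpr ⟨t, htc, (hcS htc).1 hφ⟩
    · intro φ hφ
      exact Set.mem_sUnion.mpr ⟨t, htc, (hcS htc).2.1 hφ⟩
    · rintro ⟨l, m, hl, hm, H⟩
      have hLmem : ∀ x ∈ (l.map Sum.inl ++ m.map Sum.inr), x ∈ ⋃₀ c := by
        intro x hx
        rcases List.mem_append.mp hx with hx | hx
        · rcases List.mem_map.mp hx with ⟨φ, hφ, rfl⟩
          exact Set.mem_sUnion.mpr (hl φ hφ)
        · rcases List.mem_map.mp hx with ⟨φ, hφ, rfl⟩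
          exact Set.mem_sUnion.mpr (hm φ hφ)
      obtain ⟨u, huc, hu⟩ := chain_mem hc ⟨t, htc⟩ (l.map Sum.inl ++ m.map Sum.inr) hLmem
      exact (hcS huc).2.2 ⟨l, m,
        fun φ hφ => hu _ (List.mem_append_left _ (List.mem_map_of_mem hφ)),
        fun φ hφ => hu _ (List.mem_append_right _ (List.mem_map_of_mem hφ)), H⟩
  obtain ⟨M, hMsub, hMmax⟩ := zorn_subset_nonempty S hchain _ hs₀
  have hMS : M ∈ S := hMmax.1
  refine ⟨(dec M).1, (dec M).2, ⟨hMS.2.2, ?_⟩, hMS.1, hMS.2.1⟩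
  · intro φ
    by_contra hcon
    push_neg at hcon
    obtain ⟨hP, hN⟩ := hcon
    have h1 : GSeq (insert φ (dec M).1) (dec M).2 := by
      by_contra hg
      have : insert (Sum.inl φ) M ∈ S := by
        refine ⟨fun x hx => Set.mem_insert_iff.mpr (Or.inr (hMS.1 hx)), ?_, ?_⟩
        · intro x hx; exact Set.mem_insert_iff.mpr (Or.inr (hMS.2.1 hx))
        · have e1 : (dec (insert (Sum.inl φ) M)).1 = insert φ (dec M).1 := by
            ext x; simp [dec]
          have e2 : (dec (insert (Sum.inl φ) M)).2 = (dec M).2 := by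
            ext x; simp [dec]
          rw [e1, e2]; exact hg
      exact hP (hMmax.2 this (Set.subset_insert _ _) (Set.mem_insert _ _))
    have h2 : GSeq (dec M).1 (insert φ (dec M).2) := by
      by_contra hg
      have : insert (Sum.inr φ) M ∈ S := by
        refine ⟨fun x hx => Set.mem_insert_iff.mpr (Or.inr (hMS.1 hx)), ?_, ?_⟩
        · intro x hx; exact Set.mem_insert_iff.mpr (Or.inr (hMS.2.1 hx))
        · have e1 : (dec (insert (Sum.inr φ) M)).1 = (dec M).1 := by
            ext x; simp [dec]
          have e2 : (dec (insert (Sum.inr φ) M)).2 = insert φ (dec M).2 := by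
            ext x; simp [dec]
          rw [e1, e2]; exact hg
      exact hN (hMmax.2 this (Set.subset_insert _ _) (Set.mem_insert _ _))
    exact hMS.2.2 (cutSeq φ h1 h2)

end Confl
namespace Confl

/-- strip one `next`. -/
def un : GF → GF
  | .next φ => φ
  | _ => .var 0

@[simp] theorem un_next (φ : GF) : un (.next φ) = φ := rfl

theorem backup_consistent {Φ Θ : Set GF × Set GF}
    (hΦ : CompleteType Φ.1 Φ.2) (hΘ : CompleteType Θ.1 Θ.2)
    (hle : TLe (TSucc Φ) Θ) :
    ¬ GSeq {x | ∃ ψ ∈ Θ.1, x = GF.next ψ} (Φ.2 ∪ {x | ∃ ψ ∈ Θ.2, x = GF.next ψ}) := by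
  classical
  rintro ⟨l, m, hl, hm, H⟩
  set a : List GF := l.map un with ha
  have hal : ∀ x ∈ l, GF.next (un x) = x ∧ un x ∈ Θ.1 := by
    intro x hx
    obtain ⟨ψ, hψ, rfl⟩ := hl x hx
    exact ⟨rfl, by simpa using hψ⟩
  set m₁ : List GF := m.filter (fun x => decide (x ∈ Φ.2)) with hm₁
  set m₂ : List GF := m.filter (fun x => decide (x ∉ Φ.2)) with hm₂
  set b : List GF := m₂.map un with hb
  have hbm : ∀ x ∈ m₂, GF.next (un x) = x ∧ un x ∈ Θ.2 := by
    intro x hx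
    obtain ⟨hx1, hx2⟩ := List.mem_filter.mp hx
    rcases hm x hx1 with h | h
    · simp at hx2; exact absurd h hx2
    · obtain ⟨ψ, hψ, rfl⟩ := h
      exact ⟨rfl, by simpa using hψ⟩
  set χ : GF := .coimp (GF.conj a) (GF.disj b) with hχ
  -- χ ∈ Θ.1
  have hχΘ : χ ∈ Θ.1 := by
    rcases hΘ.2 χ with h | h
    · exact h
    exfalso
    refine hΘ.1 (mkGSeq (l := a) (m := χ :: b) ?_ ?_ ?_)
    · intro x hx
      obtain ⟨y, hy, rfl⟩ := List.mem_map.mp hx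
      exact (hal y hy).2
    · intro x hx
      rcases List.mem_cons.mp hx with rfl | hx
      · exact h
      · obtain ⟨y, hy, rfl⟩ := List.mem_map.mp hx
        exact (hbm y hy).2
    · have h0 : ID a (.or (GF.disj b) χ) :=
        .mp (.ax (GTL.hb1 (GF.conj a) (GF.disj b))) (ID.conjI fun ψ hψ => .hyp hψ)
      refine ID.orE h0 ?_ ?_
      · show ID _ (.or χ (GF.disj b))
        exact ID.orI2 _ (.hyp (List.mem_cons_self))
      · exact ID.disjI (List.mem_cons_self) (.hyp (List.mem_cons_self))
  -- main derivation
  have S1 : GTL (.imp (.next (GF.conj a))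
      (.or (.next (GF.disj b)) (GF.disj m₁))) := by
    apply GTL.impOf
    have hconj : ID [GF.next (GF.conj a)] (GF.conj (a.map .next)) :=
      .mp (.ax (nextConjE a)) (.hyp (List.mem_cons_self))
    have hl' : ID [GF.next (GF.conj a)] (GF.conj l) := by
      refine ID.conjI fun x hx => ?_
      have : GF.next (un x) ∈ a.map .next :=
        List.mem_map_of_mem (ha ▸ List.mem_map_of_mem (f := un) hx)
      rw [(hal x hx).1] at this
      exact ID.conjE hconj this
    have hdm : ID [GF.next (GF.conj a)] (GF.disj m) := .mp (.ax H) hl'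
    refine ID.disjE hdm fun ψ hψ => ?_
    by_cases hψ2 : ψ ∈ Φ.2
    · exact ID.orI2 _ (ID.disjI (List.mem_filter.mpr ⟨hψ, by simp [hψ2]⟩)
        (.hyp (List.mem_cons_self)))
    · have hψm2 : ψ ∈ m₂ := List.mem_filter.mpr ⟨hψ, by simp [hψ2]⟩
      have hub : un ψ ∈ b := List.mem_map_of_mem (f := un) hψm2
      have hh : ID (ψ :: [GF.next (GF.conj a)]) (GF.next (un ψ)) := by
        rw [(hbm ψ hψm2).1]; exact .hyp (List.mem_cons_self)
      exact ID.orI1 _ (.mp (.ax (nextDisjI hub)) hh)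
  have S2 : GTL (.imp (.coimp (.next (GF.conj a)) (.next (GF.disj b))) (GF.disj m₁)) :=
    GTL.hbDis S1
  have S3 : GTL (.imp (.next χ) (GF.disj m₁)) := by
    apply GTL.impOf
    have h1 : ID [GF.next χ] (.coimp (.next (GF.conj a)) (.next (GF.disj b))) :=
      .mp (.ax (GTL.backup (GF.conj a) (GF.disj b))) (.hyp (List.mem_cons_self))
    exact .mp (.ax S2) h1
  -- contradiction with consistency of Φ
  have hnχ : GF.next χ ∈ Φ.1 := hle.2 hχΘ
  refine hΦ.1 ⟨[GF.next χ], m₁, ?_, ?_, ?_⟩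
  · intro x hx; rcases List.mem_singleton.mp hx with rfl; exact hnχ
  · intro x hx
    obtain ⟨hx1, hx2⟩ := List.mem_filter.mp hx
    simpa using hx2
  · exact GTL.seqOf (.mp (.ax S3) (.hyp (List.mem_cons_self)))

theorem backdown_consistent {Φ Θ : Set GF × Set GF}
    (hΦ : CompleteType Φ.1 Φ.2) (hΘ : CompleteType Θ.1 Θ.2)
    (hle : TLe Θ (TSucc Φ)) :
    ¬ GSeq (Φ.1 ∪ {x | ∃ ψ ∈ Θ.1, x = GF.next ψ}) {x | ∃ ψ ∈ Θ.2, x = GF.next ψ} := by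
  classical
  rintro ⟨l, m, hl, hm, H⟩
  set l₁ : List GF := l.filter (fun x => decide (x ∈ Φ.1)) with hl₁
  set l₂ : List GF := l.filter (fun x => decide (x ∉ Φ.1)) with hl₂
  set a : List GF := l₂.map un with ha
  have hal : ∀ x ∈ l₂, GF.next (un x) = x ∧ un x ∈ Θ.1 := by
    intro x hx
    obtain ⟨hx1, hx2⟩ := List.mem_filter.mp hx
    rcases hl x hx1 with h | h
    · simp at hx2; exact absurd h hx2
    · obtain ⟨ψ, hψ, rfl⟩ := h
      exact ⟨rfl, by simpa using hψ⟩
  set b : List GF := m.map un with hb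
  have hbm : ∀ x ∈ m, GF.next (un x) = x ∧ un x ∈ Θ.2 := by
    intro x hx
    obtain ⟨ψ, hψ, rfl⟩ := hm x hx
    exact ⟨rfl, by simpa using hψ⟩
  set ξ : GF := .imp (GF.conj a) (GF.disj b) with hξ
  have hξΘ : ξ ∈ Θ.2 := by
    rcases hΘ.2 ξ with h | h
    swap; · exact h
    exfalso
    refine hΘ.1 (mkGSeq (l := ξ :: a) (m := b) ?_ ?_ ?_)
    · intro x hx
      rcases List.mem_cons.mp hx with rfl | hx
      · exact h
      · obtain ⟨y, hy, rfl⟩ := List.mem_map.mp hx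
        exact (hal y hy).2
    · intro x hx
      obtain ⟨y, hy, rfl⟩ := List.mem_map.mp hx
      exact (hbm y hy).2
    · exact .mp (.hyp (List.mem_cons_self))
        (ID.conjI fun x hx => .hyp (List.mem_cons_of_mem _ hx))
  have hstep : ID (GF.next (GF.conj a) :: l₁) (GF.next (GF.disj b)) := by
    have hconj : ID (GF.next (GF.conj a) :: l₁) (GF.conj (a.map .next)) :=
      .mp (.ax (nextConjE a)) (.hyp (List.mem_cons_self))
    have hl' : ID (GF.next (GF.conj a) :: l₁) (GF.conj l) := by
      refine ID.conjI fun x hx => ?_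
      by_cases hx1 : x ∈ Φ.1
      · exact .hyp (List.mem_cons_of_mem _ (List.mem_filter.mpr ⟨hx, by simp [hx1]⟩))
      · have hx2 : x ∈ l₂ := List.mem_filter.mpr ⟨hx, by simp [hx1]⟩
        have : GF.next (un x) ∈ a.map .next :=
          List.mem_map_of_mem (ha ▸ List.mem_map_of_mem (f := un) hx2)
        rw [(hal x hx2).1] at this
        exact ID.conjE hconj this
    have hdm : ID (GF.next (GF.conj a) :: l₁) (GF.disj m) := .mp (.ax H) hl'
    refine ID.disjE hdm fun ψ hψ => ?_
    have hub : un ψ ∈ b := List.mem_map_of_mem (f := un) hψ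
    have hh : ID (ψ :: (GF.next (GF.conj a) :: l₁)) (GF.next (un ψ)) := by
      rw [(hbm ψ hψ).1]; exact .hyp (List.mem_cons_self)
    exact .mp (.ax (nextDisjI hub)) hh
  have hnξ : ID l₁ (GF.next ξ) := by
    have h1 : ID l₁ (.imp (.next (GF.conj a)) (.next (GF.disj b))) := ID.ded hstep
    exact .mp (.ax (GTL.iffR (GTL.nImp (GF.conj a) (GF.disj b)))) h1
  have hξΦ : GF.next ξ ∈ Φ.2 := hle.1 hξΘ
  refine hΦ.1 (mkGSeq (l := l₁) (m := [GF.next ξ]) ?_ ?_ ?_)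
  · intro x hx
    obtain ⟨hx1, hx2⟩ := List.mem_filter.mp hx
    simpa using hx2
  · intro x hx; rcases List.mem_singleton.mp hx with rfl; exact hξΦ
  · exact ID.disjI (List.mem_singleton.mpr rfl) hnξ

end Confl
/-- The canonical successor is fully confluent. -/
theorem stmt18 :
    (∀ Φ Ψ : Set GF × Set GF, CompleteType Φ.1 Φ.2 → CompleteType Ψ.1 Ψ.2 →
      TLe Φ Ψ → TLe (TSucc Φ) (TSucc Ψ)) ∧
    (∀ Φ Θ : Set GF × Set GF, CompleteType Φ.1 Φ.2 → CompleteType Θ.1 Θ.2 →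
      TLe (TSucc Φ) Θ →
      ∃ Υ : Set GF × Set GF, CompleteType Υ.1 Υ.2 ∧ TLe Φ Υ ∧ TSucc Υ = Θ) ∧
    (∀ Φ Θ : Set GF × Set GF, CompleteType Φ.1 Φ.2 → CompleteType Θ.1 Θ.2 →
      TLe Θ (TSucc Φ) →
      ∃ Υ : Set GF × Set GF, CompleteType Υ.1 Υ.2 ∧ TLe Υ Φ ∧ TSucc Υ = Θ) := by
  refine ⟨?_, ?_, ?_⟩
  · rintro Φ Ψ _ _ ⟨h1, h2⟩
    exact ⟨fun φ hφ => h1 hφ, fun φ hφ => h2 hφ⟩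
  · intro Φ Θ hΦ hΘ hle
    obtain ⟨P, N, hPN, hP₀, hN₀⟩ := Confl.lindenbaum
      {x | ∃ ψ ∈ Θ.1, x = GF.next ψ} (Φ.2 ∪ {x | ∃ ψ ∈ Θ.2, x = GF.next ψ})
      (Confl.backup_consistent hΦ hΘ hle)
    have memP : ∀ φ, φ ∈ Θ.1 → GF.next φ ∈ P := fun φ h => hP₀ ⟨φ, h, rfl⟩
    have memN : ∀ φ, φ ∈ Θ.2 → GF.next φ ∈ N := fun φ h =>
      hN₀ (Set.mem_union_right _ ⟨φ, h, rfl⟩)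
    refine ⟨(P, N), hPN, ⟨fun φ hφ => hN₀ (Set.mem_union_left _ hφ), ?_⟩, ?_⟩
    · intro φ hφ
      rcases hΦ.2 φ with h | h
      · exact h
      · exact absurd (hN₀ (Set.mem_union_left _ h))
          (fun hn => Confl.notBoth hPN hφ hn)
    · have e1 : (TSucc (P, N)).1 = Θ.1 := by
        ext φ
        constructor
        · intro h
          rcases hΘ.2 φ with h' | h'
          · exact h'
          · exact absurd (memN φ h') (fun hn => Confl.notBoth hPN h hn)
        · exact memP φ
      have e2 : (TSucc (P, N)).2 = Θ.2 := by
        ext φ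
        constructor
        · intro h
          rcases hΘ.2 φ with h' | h'
          · exact absurd (memP φ h') (fun hp => Confl.notBoth hPN hp h)
          · exact h'
        · exact memN φ
      exact Prod.ext e1 e2
  · intro Φ Θ hΦ hΘ hle
    obtain ⟨P, N, hPN, hP₀, hN₀⟩ := Confl.lindenbaum
      (Φ.1 ∪ {x | ∃ ψ ∈ Θ.1, x = GF.next ψ}) {x | ∃ ψ ∈ Θ.2, x = GF.next ψ}
      (Confl.backdown_consistent hΦ hΘ hle)
    have memP : ∀ φ, φ ∈ Θ.1 → GF.next φ ∈ P := fun φ h =>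
      hP₀ (Set.mem_union_right _ ⟨φ, h, rfl⟩)
    have memN : ∀ φ, φ ∈ Θ.2 → GF.next φ ∈ N := fun φ h => hN₀ ⟨φ, h, rfl⟩
    refine ⟨(P, N), hPN, ⟨?_, fun φ hφ => hP₀ (Set.mem_union_left _ hφ)⟩, ?_⟩
    · intro φ hφ
      rcases hΦ.2 φ with h | h
      · exact absurd (hP₀ (Set.mem_union_left _ h))
          (fun hp => Confl.notBoth hPN hp hφ)
      · exact h
    · have e1 : (TSucc (P, N)).1 = Θ.1 := by
        ext φ
        constructor
        · intro h
          rcases hΘ.2 φ with h' | h'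
          · exact h'
          · exact absurd (memN φ h') (fun hn => Confl.notBoth hPN h hn)
        · exact memP φ
      have e2 : (TSucc (P, N)).2 = Θ.2 := by
        ext φ
        constructor
        · intro h
          rcases hΘ.2 φ with h' | h'
          · exact absurd (memP φ h') (fun hp => Confl.notBoth hPN hp h)
          · exact h'
        · exact memN φ
      exact Prod.ext e1 e2
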